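/- Let G = (A ∪ B, E) be a vertex-weighted bipartite instance with w(a) = c > 3 for all a ∈ A and w(b) = 1 for all b ∈ B. Then any matching M that is popular in this instance is also popular in the instance obtained by setting w(b) = 0 for all b ∈ B (keeping all other data unchanged). -/

import Mathlib

structure PMInstance (V : Type) [Fintype V] [DecidableEq V] where
  A : Finset V
  E : V → V → Prop
  Esymm : ∀ u v : V, E u v → E v u
  loopless : ∀ v : V, ¬ E v v
  bipartite : ∀ u v : V, E u v → (u ∈ A ↔ v ∉ A)
  pref : V → V → V → Prop
  pref_irrefl : ∀ v u : V, ¬ pref v u u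
  pref_trans : ∀ v u z t : V, pref v u z → pref v z t → pref v u t
  pref_asymm : ∀ v u z : V, pref v u z → ¬ pref v z u
  pref_total : ∀ v u z : V, E v u → E v z → u ≠ z → pref v u z ∨ pref v z u
  w : V → ℚ
  w_nonneg : ∀ v : V, 0 ≤ w v

structure Matching (V : Type) [Fintype V] [DecidableEq V] (E : V → V → Prop) where
  m : V → Option V
  msymm : ∀ u v : V, m u = some v ↔ m v = some u
  valid : ∀ u v : V, m u = some v → E u v

attribute [local instance] Classical.propDecidable

variable {V : Type} [Fintype V] [DecidableEq V]

/-- Vertex `v` prefers matching `M` to matching `M'`. -/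
def prefersVx (I : PMInstance V) (M M' : Matching V I.E) (v : V) : Prop :=
  (M'.m v = none ∧ M.m v ≠ none) ∨
    (∃ u u' : V, M.m v = some u ∧ M'.m v = some u' ∧ I.pref v u u')

/-- Total weight of the vertices preferring `M` to `M'`. -/
noncomputable def weightPref (I : PMInstance V) (M M' : Matching V I.E) : ℚ :=
  ∑ v : V, if prefersVx I M M' v then I.w v else 0

/-- A matching is popular if it never loses a weighted head-to-head comparison. -/
def popular (I : PMInstance V) (M : Matching V I.E) : Prop :=
  ∀ M' : Matching V I.E, weightPref I M' M ≤ weightPref I M M'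

/-- The instance obtained by setting the weight of every `B`-vertex to `0`. -/
def zeroB (I : PMInstance V) : PMInstance V :=
  { I with
    w := fun v => if v ∈ I.A then I.w v else 0
    w_nonneg := by
      intro v
      by_cases h : v ∈ I.A
      · simpa [h] using I.w_nonneg v
      · simp [h] }

section AuxPopular

variable {V : Type} [Fintype V] [DecidableEq V]

private lemma not_prefers_of_eq' (I : PMInstance V) (X Y : Matching V I.E) (v : V)
    (h : X.m v = Y.m v) : ¬ prefersVx I X Y v := by
  rintro (⟨h1, h2⟩ | ⟨u, u', hu, hu', hp⟩)
  · rw [h] at h2; exact h2 h1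
  · rw [h, hu'] at hu
    obtain rfl := Option.some_inj.mp hu
    exact I.pref_irrefl v _ hp

/-- replace `M` by the matching forcing the single edge `a—b`. -/
private def f1 {E : V → V → Prop} (M : Matching V E) (a b : V) : V → Option V := fun v =>
  if v = a then some b else if v = b then some a
  else if M.m v = some a then none else M.m v

private lemma f1_dir {E : V → V → Prop} (M : Matching V E) (a b : V)
    (hab : a ≠ b) (hb : M.m b = none) :
    ∀ u v : V, f1 M a b u = some v → f1 M a b v = some u := by
  intro u v h
  unfold f1 at h ⊢
  by_cases hua : u = a
  · subst hua
    rw [if_pos rfl] at h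
    obtain rfl : b = v := Option.some_inj.mp h
    simp [Ne.symm hab]
  · rw [if_neg hua] at h
    by_cases hub : u = b
    · subst hub
      rw [if_pos rfl] at h
      obtain rfl : a = v := Option.some_inj.mp h
      simp
    · rw [if_neg hub] at h
      by_cases hma : M.m u = some a
      · rw [if_pos hma] at h; cases h
      · rw [if_neg hma] at h
        have hvu : M.m v = some u := (M.msymm u v).mp h
        have hva : v ≠ a := by rintro rfl; exact hma ((M.msymm v u).mp hvu ▸ h)
        have hvb : v ≠ b := by rintro rfl; rw [hb] at hvu; cases hvu
        rw [if_neg hva, if_neg hvb, if_neg (by rw [hvu]; exact fun hh => hua (Option.some_inj.mp hh)), hvu]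

private def forceOne (I : PMInstance V) (M : Matching V I.E) (a b : V) (hE : I.E a b)
    (hb : M.m b = none) : Matching V I.E where
  m := f1 M a b
  msymm u v := ⟨f1_dir M a b (fun h => I.loopless a (h ▸ hE)) hb u v,
                f1_dir M a b (fun h => I.loopless a (h ▸ hE)) hb v u⟩
  valid := by
    intro u v h
    unfold f1 at h
    split_ifs at h with h1 h2 h3
    · obtain rfl : b = v := Option.some_inj.mp h
      exact h1 ▸ hE
    · obtain rfl : a = v := Option.some_inj.mp h
      exact h2 ▸ I.Esymm a b hE
    · exact M.valid u v h

/-- replace `M` by the matching forcing the two edges `a—b` and `a'—b'`. -/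
private def f2 {E : V → V → Prop} (M : Matching V E) (a b a' b' : V) : V → Option V := fun v =>
  if v = a then some b else if v = b then some a
  else if v = a' then some b' else if v = b' then some a'
  else if (M.m v = some a ∨ M.m v = some b ∨ M.m v = some a' ∨ M.m v = some b') then none
  else M.m v

private lemma f2_dir {E : V → V → Prop} (M : Matching V E) (a b a' b' : V)
    (hab : a ≠ b) (haa' : a ≠ a') (hab' : a ≠ b') (ha'b : a' ≠ b) (ha'b' : a' ≠ b')
    (hbb' : b ≠ b') :
    ∀ u v : V, f2 M a b a' b' u = some v → f2 M a b a' b' v = some u := by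
  intro u v h
  unfold f2 at h ⊢
  by_cases hua : u = a
  · subst hua
    rw [if_pos rfl] at h
    obtain rfl : b = v := Option.some_inj.mp h
    simp [Ne.symm hab, Ne.symm ha'b]
  · rw [if_neg hua] at h
    by_cases hub : u = b
    · subst hub
      rw [if_pos rfl] at h
      obtain rfl : a = v := Option.some_inj.mp h
      simp [hab]
    · rw [if_neg hub] at h
      by_cases hua' : u = a'
      · subst hua'
        rw [if_pos rfl] at h
        obtain rfl : b' = v := Option.some_inj.mp h
        simp [Ne.symm hab', Ne.symm hbb', Ne.symm ha'b']
      · rw [if_neg hua'] at h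
        by_cases hub' : u = b'
        · subst hub'
          rw [if_pos rfl] at h
          obtain rfl : a' = v := Option.some_inj.mp h
          simp [Ne.symm haa', ha'b, ha'b']
        · rw [if_neg hub'] at h
          by_cases hor : (M.m u = some a ∨ M.m u = some b ∨ M.m u = some a' ∨ M.m u = some b')
          · rw [if_pos hor] at h; cases h
          · rw [if_neg hor] at h
            have hvu : M.m v = some u := (M.msymm u v).mp h
            have hva : v ≠ a := by
              rintro rfl; exact hor (Or.inl ((M.msymm v u).mp hvu ▸ h))
            have hvb : v ≠ b := by
              rintro rfl; exact hor (Or.inr (Or.inl ((M.msymm v u).mp hvu ▸ h)))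
            have hva' : v ≠ a' := by
              rintro rfl; exact hor (Or.inr (Or.inr (Or.inl ((M.msymm v u).mp hvu ▸ h))))
            have hvb' : v ≠ b' := by
              rintro rfl; exact hor (Or.inr (Or.inr (Or.inr ((M.msymm v u).mp hvu ▸ h))))
            have hnor : ¬ (M.m v = some a ∨ M.m v = some b ∨ M.m v = some a' ∨ M.m v = some b') := by
              rw [hvu]
              rintro (hh | hh | hh | hh) <;>
                [exact hua (Option.some_inj.mp hh); exact hub (Option.some_inj.mp hh);
                 exact hua' (Option.some_inj.mp hh); exact hub' (Option.some_inj.mp hh)]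
            rw [if_neg hva, if_neg hvb, if_neg hva', if_neg hvb', if_neg hnor, hvu]

private def forceTwo (I : PMInstance V) (M : Matching V I.E) (a b a' b' : V)
    (hE : I.E a b) (hE' : I.E a' b')
    (hab : a ≠ b) (haa' : a ≠ a') (hab' : a ≠ b') (ha'b : a' ≠ b) (ha'b' : a' ≠ b')
    (hbb' : b ≠ b') : Matching V I.E where
  m := f2 M a b a' b'
  msymm u v := ⟨f2_dir M a b a' b' hab haa' hab' ha'b ha'b' hbb' u v,
                f2_dir M a b a' b' hab haa' hab' ha'b ha'b' hbb' v u⟩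
  valid := by
    intro u v h
    unfold f2 at h
    split_ifs at h with h1 h2 h3 h4 h5
    · obtain rfl : b = v := Option.some_inj.mp h
      exact h1 ▸ hE
    · obtain rfl : a = v := Option.some_inj.mp h
      exact h2 ▸ I.Esymm a b hE
    · obtain rfl : b' = v := Option.some_inj.mp h
      exact h3 ▸ hE'
    · obtain rfl : a' = v := Option.some_inj.mp h
      exact h4 ▸ I.Esymm a' b' hE'
    · exact M.valid u v h

private lemma sum_opt_le {V : Type} [Fintype V] [DecidableEq V] (o : Option V) (r : ℚ)
    (hr : 0 ≤ r) : (∑ v : V, if o = some v then r else 0) ≤ r := by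
  cases o with
  | none => simp [hr]
  | some x => simp

end AuxPopular

section MainLemmas

variable {V : Type} [Fintype V] [DecidableEq V]

/-- If `M` is popular and `a ∈ A` prefers `b` to its `M`-partner (or is unmatched),
then `b` is matched in `M`. -/
private lemma partner_matched (I : PMInstance V) (c : ℚ) (hc : 3 < c)
    (hA : ∀ a ∈ I.A, I.w a = c) (hB : ∀ b : V, b ∉ I.A → I.w b = 1)
    (M : Matching V I.E) (hM : popular I M)
    (a b : V) (ha : a ∈ I.A) (hE : I.E a b)
    (hpref : ∀ u', M.m a = some u' → I.pref a b u') :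
    M.m b ≠ none := by
  intro hb
  have hab : a ≠ b := fun h => I.loopless a (h ▸ hE)
  have hbA : b ∉ I.A := (I.bipartite a b hE).mp ha
  set N : Matching V I.E := forceOne I M a b hE hb with hN
  have hNa : N.m a = some b := by simp [hN, forceOne, f1]
  have hNb : N.m b = some a := by simp [hN, forceOne, f1, Ne.symm hab]
  have pa : prefersVx I N M a := by
    rcases h : M.m a with _ | u'
    · exact Or.inl ⟨h, by rw [hNa]; exact fun hh => Option.some_ne_none _ hh⟩
    · exact Or.inr ⟨b, u', hNa, h, hpref u' h⟩
  have pb : prefersVx I N M b := Or.inl ⟨hb, by rw [hNb]; exact fun hh => Option.some_ne_none _ hh⟩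
  have lower : c + 1 ≤ weightPref I N M := by
    have h1 : ∑ v ∈ ({a, b} : Finset V), (if prefersVx I N M v then I.w v else 0) = c + 1 := by
      rw [Finset.sum_pair hab, if_pos pa, if_pos pb, hA a ha, hB b hbA]
    calc c + 1 = _ := h1.symm
      _ ≤ weightPref I N M := by
          unfold weightPref
          refine Finset.sum_le_sum_of_subset_of_nonneg (Finset.subset_univ _) ?_
          intro i _ _
          split_ifs
          · exact I.w_nonneg i
          · exact le_rfl
  have upper : weightPref I M N ≤ 1 := by
    have hpt : ∀ v : V, (if prefersVx I M N v then I.w v else 0) ≤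
        (if M.m a = some v then (1 : ℚ) else 0) := by
      intro v
      by_cases hp : prefersVx I M N v
      · have hva : v ≠ a := by
          rintro rfl
          rcases hp with ⟨h1, _⟩ | ⟨u, u', h1, h2, hpp⟩
          · rw [hNa] at h1; cases h1
          · rw [hNa] at h2
            obtain rfl : b = u' := Option.some_inj.mp h2
            exact I.pref_asymm v b u (hpref u h1) hpp
        have hvb : v ≠ b := by
          rintro rfl
          rcases hp with ⟨_, h2⟩ | ⟨u, u', h1, _, _⟩
          · exact h2 hb
          · rw [hb] at h1; cases h1
        have hch : M.m v = some a := by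
          by_contra hne
          have heq : M.m v = N.m v := by
            show M.m v = f1 M a b v
            unfold f1
            rw [if_neg hva, if_neg hvb, if_neg hne]
          exact not_prefers_of_eq' I M N v heq hp
        have hMav : M.m a = some v := (M.msymm v a).mp hch
        have hvA : v ∉ I.A := fun hv => ((I.bipartite v a (M.valid v a hch)).mp hv) ha
        rw [if_pos hp, if_pos hMav, hB v hvA]
      · rw [if_neg hp]
        split_ifs <;> norm_num
    have h2 : weightPref I M N ≤ ∑ v : V, (if M.m a = some v then (1 : ℚ) else 0) := by
      unfold weightPref
      exact Finset.sum_le_sum fun v _ => hpt v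
    exact h2.trans (sum_opt_le _ _ zero_le_one)
  have := hM N
  linarith

/-- If `M` is popular, `a ∈ A` prefers `b` to its `M`-partner, `b` is `M`-matched
to `a'`, and `a'` prefers `b'` (a neighbor) to `b`, we get a contradiction. -/
private lemma no_double_happy (I : PMInstance V) (c : ℚ) (hc : 3 < c)
    (hA : ∀ a ∈ I.A, I.w a = c) (hB : ∀ b : V, b ∉ I.A → I.w b = 1)
    (M : Matching V I.E) (hM : popular I M)
    (a b a' b' : V) (ha : a ∈ I.A) (hEab : I.E a b)
    (hprefa : ∀ u', M.m a = some u' → I.pref a b u')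
    (hMb : M.m b = some a') (hEa'b' : I.E a' b') (hpref' : I.pref a' b' b) : False := by
  have hc0 : (0 : ℚ) ≤ c := by linarith
  have hbA : b ∉ I.A := (I.bipartite a b hEab).mp ha
  have ha'A : a' ∈ I.A := by
    by_contra h
    exact hbA ((I.bipartite b a' (M.valid b a' hMb)).mpr h)
  have hb'A : b' ∉ I.A := (I.bipartite a' b' hEa'b').mp ha'A
  have haa' : a ≠ a' := by
    rintro rfl
    exact I.pref_irrefl a b (hprefa b ((M.msymm b a).mp hMb))
  have hbb' : b ≠ b' := by
    rintro rfl
    exact I.pref_irrefl a' b hpref'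
  have hab : a ≠ b := fun h => hbA (h ▸ ha)
  have hab' : a ≠ b' := fun h => hb'A (h ▸ ha)
  have ha'b : a' ≠ b := fun h => hbA (h ▸ ha'A)
  have ha'b' : a' ≠ b' := fun h => hb'A (h ▸ ha'A)
  set N : Matching V I.E :=
    forceTwo I M a b a' b' hEab hEa'b' hab haa' hab' ha'b ha'b' hbb' with hN
  have hMa' : M.m a' = some b := (M.msymm b a').mp hMb
  have hNa : N.m a = some b := by simp [hN, forceTwo, f2]
  have hNa' : N.m a' = some b' := by simp [hN, forceTwo, f2, Ne.symm haa', ha'b]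
  have pa : prefersVx I N M a := by
    rcases h : M.m a with _ | u'
    · exact Or.inl ⟨h, by rw [hNa]; exact fun hh => Option.some_ne_none _ hh⟩
    · exact Or.inr ⟨b, u', hNa, h, hprefa u' h⟩
  have pa' : prefersVx I N M a' := Or.inr ⟨b', b, hNa', hMa', hpref'⟩
  have lower : c + c ≤ weightPref I N M := by
    have h1 : ∑ v ∈ ({a, a'} : Finset V), (if prefersVx I N M v then I.w v else 0) = c + c := by
      rw [Finset.sum_pair haa', if_pos pa, if_pos pa', hA a ha, hA a' ha'A]
    calc c + c = _ := h1.symm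
      _ ≤ weightPref I N M := by
          unfold weightPref
          refine Finset.sum_le_sum_of_subset_of_nonneg (Finset.subset_univ _) ?_
          intro i _ _
          split_ifs
          · exact I.w_nonneg i
          · exact le_rfl
  have upper : weightPref I M N ≤ 1 + c + (1 + 1) := by
    have hpt : ∀ v : V, (if prefersVx I M N v then I.w v else 0) ≤
        (if M.m a = some v then (1 : ℚ) else 0) + (if M.m b' = some v then c else 0)
          + ((if v = b then (1 : ℚ) else 0) + (if v = b' then (1 : ℚ) else 0)) := by
      intro v
      have ht1 : (0 : ℚ) ≤ if M.m a = some v then (1 : ℚ) else 0 := by split_ifs <;> norm_num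
      have ht2 : (0 : ℚ) ≤ if M.m b' = some v then c else 0 := by
        split_ifs
        · exact hc0
        · exact le_rfl
      have ht3 : (0 : ℚ) ≤ if v = b then (1 : ℚ) else 0 := by split_ifs <;> norm_num
      have ht4 : (0 : ℚ) ≤ if v = b' then (1 : ℚ) else 0 := by split_ifs <;> norm_num
      by_cases hp : prefersVx I M N v
      · rw [if_pos hp]
        have hva : v ≠ a := by
          rintro rfl
          rcases hp with ⟨h1, _⟩ | ⟨u, u', h1, h2, hpp⟩
          · rw [hNa] at h1; cases h1
          · rw [hNa] at h2
            obtain rfl : b = u' := Option.some_inj.mp h2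
            exact I.pref_asymm v b u (hprefa u h1) hpp
        have hva' : v ≠ a' := by
          rintro rfl
          rcases hp with ⟨h1, _⟩ | ⟨u, u', h1, h2, hpp⟩
          · rw [hNa'] at h1; cases h1
          · rw [hNa'] at h2
            obtain rfl : b' = u' := Option.some_inj.mp h2
            rw [hMa'] at h1
            obtain rfl : b = u := Option.some_inj.mp h1
            exact I.pref_asymm v b' b hpref' hpp
        by_cases hvb : v = b
        · rw [hB v (hvb ▸ hbA), if_pos hvb]
          linarith
        by_cases hvb' : v = b'
        · rw [hB v (hvb' ▸ hb'A), if_pos hvb']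
          linarith
        have hor : M.m v = some a ∨ M.m v = some b ∨ M.m v = some a' ∨ M.m v = some b' := by
          by_contra hne
          have heq : M.m v = N.m v := by
            show M.m v = f2 M a b a' b' v
            unfold f2
            rw [if_neg hva, if_neg hvb, if_neg hva', if_neg hvb', if_neg hne]
          exact not_prefers_of_eq' I M N v heq hp
        rcases hor with hh | hh | hh | hh
        · have hMav : M.m a = some v := (M.msymm v a).mp hh
          have hvA : v ∉ I.A := fun hv => ((I.bipartite v a (M.valid v a hh)).mp hv) ha
          rw [hB v hvA, if_pos hMav]
          linarith
        · exact absurd (by rw [(M.msymm v b).mp hh] at hMb; exact Option.some_inj.mp hMb) hva'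
        · have : M.m a' = some v := (M.msymm v a').mp hh
          rw [hMa'] at this
          exact absurd (Option.some_inj.mp this).symm hvb
        · have hMb'v : M.m b' = some v := (M.msymm v b').mp hh
          have hvA : v ∈ I.A := (I.bipartite v b' (M.valid v b' hh)).mpr hb'A
          rw [hA v hvA, if_pos hMb'v]
          linarith
      · rw [if_neg hp]
        linarith
    have h2 : weightPref I M N ≤
        ∑ v : V, ((if M.m a = some v then (1 : ℚ) else 0) + (if M.m b' = some v then c else 0)
          + ((if v = b then (1 : ℚ) else 0) + (if v = b' then (1 : ℚ) else 0))) := by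
      unfold weightPref
      exact Finset.sum_le_sum fun v _ => hpt v
    have h3 : (∑ v : V, (if M.m a = some v then (1 : ℚ) else 0)) ≤ 1 :=
      sum_opt_le _ _ zero_le_one
    have h4 : (∑ v : V, (if M.m b' = some v then c else 0)) ≤ c := sum_opt_le _ _ hc0
    have h5 : (∑ v : V, (if v = b then (1 : ℚ) else 0)) = 1 := by simp
    have h6 : (∑ v : V, (if v = b' then (1 : ℚ) else 0)) = 1 := by simp
    rw [Finset.sum_add_distrib, Finset.sum_add_distrib, Finset.sum_add_distrib] at h2
    rw [h5, h6] at h2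
    linarith
  have := hM N
  linarith

end MainLemmas

/-- With `w(a) = c > 3` on `A` and `w(b) = 1` on `B`, any popular matching stays
popular after the `B`-weights are reduced to `0`. -/
theorem popular_of_zeroB (I : PMInstance V) (c : ℚ) (hc : 3 < c)
    (hA : ∀ a ∈ I.A, I.w a = c) (hB : ∀ b : V, b ∉ I.A → I.w b = 1)
    (M : Matching V I.E) (hM : popular I M) :
    popular (zeroB I) M := by
  have hc0 : (0 : ℚ) ≤ c := by linarith
  intro M'
  -- `M'` is also a matching for `I` since `(zeroB I).E = I.E` definitionally
  let M'' : Matching V I.E := M'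
  have key : ∀ X Y : Matching V I.E,
      weightPref (zeroB I) X Y =
        ((Finset.univ.filter (fun v => prefersVx I X Y v ∧ v ∈ I.A)).card : ℚ) * c := by
    intro X Y
    have e1 : weightPref (zeroB I) X Y =
        ∑ v : V, (if prefersVx I X Y v ∧ v ∈ I.A then c else 0) := by
      refine Finset.sum_congr rfl fun v _ => ?_
      have eprop : prefersVx (zeroB I) X Y v = prefersVx I X Y v := rfl
      have ew : (zeroB I).w v = if v ∈ I.A then I.w v else 0 := rfl
      rw [eprop, ew]
      by_cases hp : prefersVx I X Y v <;> by_cases hv : v ∈ I.A <;>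
        simp [hp, hv, hA v]
    rw [e1, ← Finset.sum_filter, Finset.sum_const, nsmul_eq_mul]
  rw [key M'' M, key M M'']
  refine mul_le_mul_of_nonneg_right (Nat.cast_le.mpr ?_) hc0
  -- the crucial injection
  set P := Finset.univ.filter (fun v => prefersVx I M'' M v ∧ v ∈ I.A) with hP
  set Q := Finset.univ.filter (fun v => prefersVx I M M'' v ∧ v ∈ I.A) with hQ
  have step : ∀ a ∈ P, ∃ b a', M''.m a = some b ∧ M.m b = some a' ∧ a' ∈ Q := by
    intro a haP
    rw [hP, Finset.mem_filter] at haP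
    obtain ⟨-, hpa, haA⟩ := haP
    obtain ⟨b, hb⟩ : ∃ b, M''.m a = some b := by
      rcases hpa with ⟨h1, h2⟩ | ⟨u, u', h1, h2, hp⟩
      · rcases hmm : M''.m a with _ | x
        · exact absurd hmm h2
        · exact ⟨x, rfl⟩
      · exact ⟨u, h1⟩
    have hprefb : ∀ u', M.m a = some u' → I.pref a b u' := by
      intro u' hu'
      rcases hpa with ⟨h1, _⟩ | ⟨u, u'', h1, h2, hp⟩
      · rw [h1] at hu'; cases hu'
      · rw [hb] at h1
        obtain rfl : b = u := Option.some_inj.mp h1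
        rw [h2] at hu'
        obtain rfl : u'' = u' := Option.some_inj.mp hu'
        exact hp
    have hEab : I.E a b := M''.valid a b hb
    have hbA : b ∉ I.A := (I.bipartite a b hEab).mp haA
    have hMb := partner_matched I c hc hA hB M hM a b haA hEab hprefb
    obtain ⟨a', ha'⟩ : ∃ a', M.m b = some a' := by
      rcases hmm : M.m b with _ | x
      · exact absurd hmm hMb
      · exact ⟨x, rfl⟩
    have hEba' : I.E b a' := M.valid b a' ha'
    have ha'A : a' ∈ I.A := by
      by_contra h
      exact hbA ((I.bipartite b a' hEba').mpr h)
    have haa' : a ≠ a' := by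
      rintro rfl
      exact I.pref_irrefl a b (hprefb b ((M.msymm b a).mp ha'))
    have hMa' : M.m a' = some b := (M.msymm b a').mp ha'
    refine ⟨b, a', hb, ha', ?_⟩
    rw [hQ, Finset.mem_filter]
    refine ⟨Finset.mem_univ _, ?_, ha'A⟩
    rcases h' : M''.m a' with _ | b'
    · exact Or.inl ⟨h', by rw [hMa']; exact fun hh => Option.some_ne_none _ hh⟩
    · have hEa'b' : I.E a' b' := M''.valid a' b' h'
      have hbb' : b ≠ b' := by
        rintro rfl
        have h2 : M''.m b = some a' := (M''.msymm a' b).mp h'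
        have h3 : M''.m b = some a := (M''.msymm a b).mp hb
        rw [h2] at h3
        exact haa' (Option.some_inj.mp h3).symm
      rcases I.pref_total a' b b' (I.Esymm b a' hEba') hEa'b' hbb' with hp | hp
      · exact Or.inr ⟨b, b', hMa', h', hp⟩
      · exact absurd (no_double_happy I c hc hA hB M hM a b a' b' haA hEab hprefb ha' hEa'b' hp) not_false
  classical
  refine Finset.card_le_card_of_injOn (fun a => ((M''.m a).bind M.m).getD a) ?_ ?_
  · intro a haP
    obtain ⟨b, a', hb, ha', hQ'⟩ := step a haP
    show ((M''.m a).bind M.m).getD a ∈ Q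
    have : ((M''.m a).bind M.m).getD a = a' := by rw [hb]; simp [ha']
    rw [this]
    exact hQ'
  · intro a1 h1 a2 h2 heq
    obtain ⟨b1, a1', hb1, ha1', -⟩ := step a1 h1
    obtain ⟨b2, a2', hb2, ha2', -⟩ := step a2 h2
    have heq' : ((M''.m a1).bind M.m).getD a1 = ((M''.m a2).bind M.m).getD a2 := heq
    have e1 : ((M''.m a1).bind M.m).getD a1 = a1' := by rw [hb1]; simp [ha1']
    have e2 : ((M''.m a2).bind M.m).getD a2 = a2' := by rw [hb2]; simp [ha2']
    rw [e1, e2] at heq'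
    subst heq'
    have f1 : M.m a1' = some b1 := (M.msymm b1 a1').mp ha1'
    have f2 : M.m a1' = some b2 := (M.msymm b2 a1').mp ha2'
    rw [f1] at f2
    obtain rfl : b1 = b2 := Option.some_inj.mp f2
    have g1 : M''.m b1 = some a1 := (M''.msymm a1 b1).mp hb1
    have g2 : M''.m b1 = some a2 := (M''.msymm a2 b1).mp hb2
    rw [g1] at g2
    exact Option.some_inj.mp g2
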